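/- Let K be a number field with [K : ℚ] = 2 and ring of integers O_K, let ℓ be a prime such that the ideal generated by ℓ in O_K is a prime ideal (ℓ inert), and let ρ : O_K →+* Matrix (Fin 2) (Fin 2) (ZMod ℓ) be a ring homomorphism such that ρ(α₀) is not a scalar matrix for some α₀ ∈ O_K. Then for every nonzero vector v ∈ (Fin 2 → ZMod ℓ) there exists α ∈ O_K with ρ(α).mulVec v ∉ Submodule.span (ZMod ℓ) {v}. -/
import Mathlib


open NumberField

theorem distortion_exists_of_inert (K : Type*) [Field K] [NumberField K]
    (hdeg : Module.finrank ℚ K = 2) (ℓ : ℕ) [Fact ℓ.Prime]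
    (hinert : (Ideal.span {(ℓ : 𝓞 K)}).IsPrime)
    (ρ : 𝓞 K →+* Matrix (Fin 2) (Fin 2) (ZMod ℓ))
    (α₀ : 𝓞 K) (hα₀ : ∀ c : ZMod ℓ, ρ α₀ ≠ c • (1 : Matrix (Fin 2) (Fin 2) (ZMod ℓ)))
    (v : Fin 2 → ZMod ℓ) (hv : v ≠ 0) :
    ∃ α : 𝓞 K, (ρ α).mulVec v ∉ Submodule.span (ZMod ℓ) {v} := by
  by_contra h
  push_neg at h
  obtain ⟨i, hi⟩ : ∃ i, v i ≠ 0 := Function.ne_iff.mp hv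
  have key : ∀ α : 𝓞 K, ∃ c : ZMod ℓ, (ρ α).mulVec v = c • v := by
    intro α
    obtain ⟨c, hc⟩ := Submodule.mem_span_singleton.mp (h α)
    exact ⟨c, hc.symm⟩
  choose c hc using key
  have uniq : ∀ a b : ZMod ℓ, a • v = b • v → a = b := by
    intro a b hab
    have := congrFun hab i
    simp only [Pi.smul_apply, smul_eq_mul] at this
    exact mul_right_cancel₀ hi this
  have c1 : c 1 = 1 := by
    apply uniq
    rw [← hc 1]
    simp [Matrix.one_mulVec]
  have cmul : ∀ α β : 𝓞 K, c (α * β) = c α * c β := by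
    intro α β
    apply uniq
    rw [← hc (α * β), map_mul, ← Matrix.mulVec_mulVec, hc β, Matrix.mulVec_smul, hc α,
      smul_smul, mul_comm (c β) (c α)]
  have cadd : ∀ α β : 𝓞 K, c (α + β) = c α + c β := by
    intro α β
    apply uniq
    rw [← hc (α + β), map_add, Matrix.add_mulVec, hc α, hc β, add_smul]
  have c0 : c 0 = 0 := by
    apply uniq
    rw [← hc 0]
    simp
  let φ : 𝓞 K →+* ZMod ℓ :=
    { toFun := c, map_one' := c1, map_mul' := cmul, map_zero' := c0, map_add' := cadd }
  -- the kernel of φ contains ℓ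
  have hℓ0 : φ (ℓ : 𝓞 K) = 0 := by
    rw [map_natCast, ZMod.natCast_self]
  have hle : Ideal.span {(ℓ : 𝓞 K)} ≤ RingHom.ker φ := by
    rw [Ideal.span_le, Set.singleton_subset_iff]
    exact hℓ0
  have hℓne : (ℓ : 𝓞 K) ≠ 0 := Nat.cast_ne_zero.mpr (Fact.out : ℓ.Prime).ne_zero
  have hbot : Ideal.span {(ℓ : 𝓞 K)} ≠ ⊥ := by
    simp [Ideal.span_singleton_eq_bot, hℓne]
  have hmax : (Ideal.span {(ℓ : 𝓞 K)}).IsMaximal := hinert.isMaximal hbot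
  have hker : Ideal.span {(ℓ : 𝓞 K)} = RingHom.ker φ :=
    hmax.eq_of_le (RingHom.ker_ne_top φ) hle
  -- cardinality of the quotient is ℓ^2
  have hcard : Nat.card (𝓞 K ⧸ RingHom.ker φ) = ℓ ^ 2 := by
    rw [← hker]
    have : Ideal.absNorm (Ideal.span {(ℓ : 𝓞 K)}) = ℓ ^ 2 := by
      rw [Ideal.absNorm_span_singleton]
      have : (ℓ : 𝓞 K) = algebraMap ℤ (𝓞 K) (ℓ : ℤ) := by simp
      rw [this, Algebra.norm_algebraMap_of_basis (RingOfIntegers.basis K),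
        ← Module.finrank_eq_card_basis (RingOfIntegers.basis K), RingOfIntegers.rank, hdeg]
      simp [Int.natAbs_pow]
    rw [← this, Ideal.absNorm_apply, Submodule.cardQuot_apply]
  -- but the quotient injects into ZMod ℓ
  have hinj : Function.Injective (RingHom.kerLift φ) := RingHom.kerLift_injective φ
  have hle2 : Nat.card (𝓞 K ⧸ RingHom.ker φ) ≤ Nat.card (ZMod ℓ) :=
    Nat.card_le_card_of_injective _ hinj
  rw [hcard, Nat.card_zmod] at hle2
  have h2 : 2 ≤ ℓ := (Fact.out : ℓ.Prime).two_le
  nlinarith
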